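/- If εn balls are thrown independently and uniformly at random into cn/lg lg lg n bins (constants 0 < ε ≤ 1, c > 0 with ε·lg(e)/c > 1, n large), then the expected number of balls that land alone in their bin is O(n/(lg lg n)^d) for some constant d > 1, in particular o(n). -/

import Mathlib

open Finset Filter Asymptotics

/-- `lg lg n` (base-2 iterated logarithm). -/
noncomputable def llg (x : ℝ) : ℝ := Real.logb 2 (Real.logb 2 x)

/-- `lg lg lg n`. -/
noncomputable def lll (x : ℝ) : ℝ := Real.logb 2 (llg x)

/-- Number of balls that land alone in their bin, for a placement `f` of `k` balls in `m` bins. -/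
def succCount (k m : ℕ) (f : Fin k → Fin m) : ℕ :=
  (univ.filter (fun i => ∀ i', f i' = f i → i' = i)).card

/-- Expected number of balls landing alone, uniform over placements of `k` balls into `m` bins. -/
noncomputable def succExp (k m : ℕ) : ℝ :=
  (∑ f : Fin k → Fin m, (succCount k m f : ℝ)) / (m : ℝ) ^ k

lemma fiber_card (k m : ℕ) (i : Fin k) :
    (univ.filter (fun f : Fin k → Fin m => ∀ i', f i' = f i → i' = i)).card
      = m * (m - 1) ^ (k - 1) := by
  rw [Finset.card_eq_sum_card_fiberwise (f := fun f => f i) (t := (univ : Finset (Fin m)))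
    (fun f _ => mem_univ _)]
  have key : ∀ b : Fin m,
      ((univ.filter fun f : Fin k → Fin m => ∀ i', f i' = f i → i' = i).filter
        fun f => f i = b)
      = Fintype.piFinset (fun j => if j = i then ({b} : Finset (Fin m)) else {b}ᶜ) := by
    intro b
    ext f
    simp only [mem_filter, mem_univ, true_and, Fintype.mem_piFinset]
    constructor
    · rintro ⟨h1, h2⟩ j
      by_cases hj : j = i
      · subst hj; simp [h2]
      · simp only [hj, if_false, Finset.mem_compl, Finset.mem_singleton]
        intro hfb
        exact hj (h1 j (by rw [hfb, h2]))
    · intro h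
      have hfi : f i = b := by have hi := h i; simpa using hi
      refine ⟨fun j hj => ?_, hfi⟩
      by_cases hji : j = i
      · exact hji
      · exfalso
        have hjb := h j
        simp only [hji, if_false, Finset.mem_compl, Finset.mem_singleton] at hjb
        exact hjb (hj.trans hfi)
  have hcard : ∀ b : Fin m,
      (Fintype.piFinset (fun j => if j = i then ({b} : Finset (Fin m)) else {b}ᶜ)).card
        = (m - 1) ^ (k - 1) := by
    intro b
    rw [Fintype.card_piFinset]
    have hterm : ∀ j : Fin k, ((if j = i then ({b} : Finset (Fin m)) else {b}ᶜ)).card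
        = if j = i then 1 else m - 1 := by
      intro j
      split <;> simp [Finset.card_compl]
    simp_rw [hterm]
    rw [← Finset.mul_prod_erase univ _ (mem_univ i), if_pos rfl, one_mul]
    rw [Finset.prod_congr rfl (fun j hj => if_neg (Finset.ne_of_mem_erase hj)),
      Finset.prod_const, Finset.card_erase_of_mem (mem_univ i), card_univ, Fintype.card_fin]
  calc ∑ b : Fin m,
        ((univ.filter fun f : Fin k → Fin m => ∀ i', f i' = f i → i' = i).filter
          fun f => f i = b).card
      = ∑ _b : Fin m, (m - 1) ^ (k - 1) := by
        refine Finset.sum_congr rfl fun b _ => ?_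
        rw [key b, hcard b]
    _ = m * (m - 1) ^ (k - 1) := by
        rw [Finset.sum_const, card_univ, Fintype.card_fin, smul_eq_mul]

lemma sum_succCount (k m : ℕ) :
    ∑ f : Fin k → Fin m, succCount k m f = k * (m * (m - 1) ^ (k - 1)) := by
  unfold succCount
  simp_rw [Finset.card_filter]
  rw [Finset.sum_comm]
  have h : ∀ i : Fin k,
      (∑ f : Fin k → Fin m, if (∀ i', f i' = f i → i' = i) then 1 else 0)
        = m * (m - 1) ^ (k - 1) := by
    intro i
    rw [← Finset.card_filter]
    exact fiber_card k m i
  calc (∑ i : Fin k, ∑ f : Fin k → Fin m, if (∀ i', f i' = f i → i' = i) then 1 else 0)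
      = ∑ _i : Fin k, m * (m - 1) ^ (k - 1) := Finset.sum_congr rfl fun i _ => h i
    _ = k * (m * (m - 1) ^ (k - 1)) := by
        rw [Finset.sum_const, card_univ, Fintype.card_fin, smul_eq_mul]

lemma succExp_le (k m : ℕ) (hm : 1 ≤ m) :
    succExp k m ≤ (k : ℝ) * Real.exp (-(((k : ℝ) - 1) / m)) := by
  have hm0 : (0 : ℝ) < m := by exact_mod_cast hm
  cases k with
  | zero => simp [succExp, succCount]
  | succ k' =>
    have hsum : (∑ f : Fin (k' + 1) → Fin m, (succCount (k' + 1) m f : ℝ))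
        = ((k' : ℝ) + 1) * ((m : ℝ) * ((m : ℝ) - 1) ^ k') := by
      have h := sum_succCount (k' + 1) m
      have h2 : ((∑ f : Fin (k' + 1) → Fin m, succCount (k' + 1) m f : ℕ) : ℝ)
          = (((k' + 1) * (m * (m - 1) ^ (k' + 1 - 1)) : ℕ) : ℝ) := by rw [h]
      push_cast [Nat.cast_sub hm] at h2
      simpa using h2
    have heq : succExp (k' + 1) m = ((k' : ℝ) + 1) * (((m : ℝ) - 1) / m) ^ k' := by
      unfold succExp
      rw [hsum, div_pow]
      field_simp
      ring
    rw [heq]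
    have h1 : (0 : ℝ) ≤ ((m : ℝ) - 1) / m := by
      apply div_nonneg _ hm0.le
      have : (1 : ℝ) ≤ m := by exact_mod_cast hm
      linarith
    have h2 : ((m : ℝ) - 1) / m ≤ Real.exp (-(1 / m)) := by
      have he := Real.add_one_le_exp (-(1 / (m : ℝ)))
      have hexpand : ((m : ℝ) - 1) / m = 1 - 1 / m := by field_simp
      rw [hexpand]; linarith
    calc ((k' : ℝ) + 1) * (((m : ℝ) - 1) / m) ^ k'
        ≤ ((k' : ℝ) + 1) * Real.exp (-(1 / m)) ^ k' := by
          apply mul_le_mul_of_nonneg_left (pow_le_pow_left₀ h1 h2 k') (by positivity)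
      _ = ((k' : ℝ) + 1) * Real.exp (-((k' : ℝ) / m)) := by
          rw [← Real.exp_nat_mul]; congr 1; ring
      _ = ((k' + 1 : ℕ) : ℝ) * Real.exp (-((((k' + 1 : ℕ) : ℝ) - 1) / m)) := by
          push_cast; ring_nf

lemma logb2_16 : Real.logb 2 16 = 4 := by
  rw [show (16 : ℝ) = 2 ^ (4 : ℕ) by norm_num, Real.logb_pow,
    Real.logb_self_eq_one (by norm_num)]
  norm_num

lemma logb2_4 : Real.logb 2 4 = 2 := by
  rw [show (4 : ℝ) = 2 ^ (2 : ℕ) by norm_num, Real.logb_pow,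
    Real.logb_self_eq_one (by norm_num)]
  norm_num

theorem stmt4 (ε c : ℝ) (hε0 : 0 < ε) (hε1 : ε ≤ 1) (hc : 0 < c)
    (hlarge : 1 < ε * Real.logb 2 (Real.exp 1) / c) :
    ∃ d > (1 : ℝ), ∃ C > (0 : ℝ),
      (∀ᶠ n : ℕ in atTop, ∀ k m : ℕ,
          (k : ℝ) = ε * n → (m : ℝ) = c * n / lll n →
          succExp k m ≤ C * n / llg n ^ d) ∧
      (fun n : ℕ => C * n / llg n ^ d) =o[atTop] fun n : ℕ => (n : ℝ) := by
  have hlog2 : (0 : ℝ) < Real.log 2 := Real.log_pos one_lt_two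
  set d' : ℝ := ε / (c * Real.log 2) with hd'
  have hd'1 : 1 < d' := by
    have he : Real.logb 2 (Real.exp 1) = 1 / Real.log 2 := by
      rw [Real.logb, Real.log_exp]
    rw [he] at hlarge
    have h : ε * (1 / Real.log 2) / c = d' := by
      rw [hd', mul_one_div, div_div, mul_comm]
    linarith [hlarge, h.le, h.ge]
  set d : ℝ := (1 + d') / 2 with hdd
  have hd1 : 1 < d := by rw [hdd]; linarith
  have hdd' : d < d' := by rw [hdd]; linarith
  refine ⟨d, hd1, ε * Real.exp 1, by positivity, ?_, ?_⟩
  · filter_upwards [eventually_ge_atTop 16] with n hn16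
    intro k m hk hm
    have hn : (16 : ℝ) ≤ n := by exact_mod_cast hn16
    have hn0 : (0 : ℝ) < n := by linarith
    have hlogn : (4 : ℝ) ≤ Real.logb 2 n := by
      calc (4 : ℝ) = Real.logb 2 16 := logb2_16.symm
        _ ≤ Real.logb 2 n := Real.logb_le_logb_of_le one_lt_two (by norm_num) hn
    have hllg : (2 : ℝ) ≤ llg n := by
      unfold llg
      calc (2 : ℝ) = Real.logb 2 4 := logb2_4.symm
        _ ≤ Real.logb 2 (Real.logb 2 n) :=
            Real.logb_le_logb_of_le one_lt_two (by norm_num) hlogn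
    have hlll : (1 : ℝ) ≤ lll n := by
      unfold lll
      calc (1 : ℝ) = Real.logb 2 2 := (Real.logb_self_eq_one (by norm_num)).symm
        _ ≤ Real.logb 2 (llg n) :=
            Real.logb_le_logb_of_le one_lt_two (by norm_num) hllg
    have hlll0 : (0 : ℝ) < lll n := by linarith
    have hm0 : (0 : ℝ) < m := by rw [hm]; positivity
    have hm1 : 1 ≤ m := Nat.cast_pos.mp hm0
    have hm1' : (1 : ℝ) ≤ m := by exact_mod_cast hm1
    have hkm : (k : ℝ) / m = ε / c * lll n := by
      rw [hk, hm]; field_simp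
    have hllg0 : (0 : ℝ) < llg n := by linarith
    calc succExp k m ≤ (k : ℝ) * Real.exp (-(((k : ℝ) - 1) / m)) := succExp_le k m hm1
      _ = (k : ℝ) * (Real.exp (1 / m) * Real.exp (-((k : ℝ) / m))) := by
          rw [← Real.exp_add]; congr 1; ring
      _ ≤ (k : ℝ) * (Real.exp 1 * Real.exp (-((k : ℝ) / m))) := by
          have hkpos : (0 : ℝ) ≤ (k : ℝ) := Nat.cast_nonneg k
          have h1m : 1 / (m : ℝ) ≤ 1 := by
            rw [div_le_one hm0]; exact hm1'
          have := Real.exp_le_exp.mpr h1m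
          have hE : (0:ℝ) ≤ Real.exp (-((k : ℝ) / m)) := (Real.exp_pos _).le
          exact mul_le_mul_of_nonneg_left (mul_le_mul_of_nonneg_right this hE) hkpos
      _ = ε * n * (Real.exp 1 * llg n ^ (-d')) := by
          rw [hkm, hk]
          congr 2
          rw [Real.rpow_def_of_pos hllg0]
          congr 1
          show -(ε / c * lll n) = Real.log (llg n) * -d'
          unfold lll
          rw [Real.logb, hd']
          field_simp
      _ ≤ ε * n * (Real.exp 1 * llg n ^ (-d)) := by
          have hr := Real.rpow_le_rpow_of_exponent_le (by linarith : (1:ℝ) ≤ llg n)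
            (by linarith : -d' ≤ -d)
          have h1 : (0:ℝ) ≤ ε * n := by positivity
          exact mul_le_mul_of_nonneg_left
            (mul_le_mul_of_nonneg_left hr (Real.exp_pos 1).le) h1
      _ = ε * Real.exp 1 * n / llg n ^ d := by
          rw [Real.rpow_neg hllg0.le]
          field_simp
  · have hz : ∀ n : ℕ, ((n : ℕ) : ℝ) = 0 → ε * Real.exp 1 * n / llg n ^ d = 0 := by
      intro n h; rw [h]; simp
    rw [isLittleO_iff_tendsto hz]
    have h1 : Tendsto (fun n : ℕ => llg (n : ℝ)) atTop atTop := by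
      have := ((Real.tendsto_logb_atTop (one_lt_two)).comp
        (Real.tendsto_logb_atTop (one_lt_two))).comp tendsto_natCast_atTop_atTop
      simpa [Function.comp_def, llg] using this
    have htend : Tendsto (fun n : ℕ => llg (n : ℝ) ^ d) atTop atTop :=
      (tendsto_rpow_atTop (by linarith : (0:ℝ) < d)).comp h1
    have hlim : Tendsto (fun n : ℕ => ε * Real.exp 1 / llg (n : ℝ) ^ d) atTop (nhds 0) :=
      Tendsto.div_atTop tendsto_const_nhds htend
    refine hlim.congr' ?_
    filter_upwards [eventually_ge_atTop 1] with n hn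
    have hn0 : ((n : ℕ) : ℝ) ≠ 0 := by
      have : (0 : ℕ) < n := hn
      exact_mod_cast this.ne'
    have heq : ε * Real.exp 1 * (n:ℝ) / llg (n:ℝ) ^ d / (n:ℝ)
        = ε * Real.exp 1 / llg (n:ℝ) ^ d * ((n:ℝ) / (n:ℝ)) := by ring
    rw [heq, div_self hn0, mul_one]
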